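/- With k(r) = (n(n+2)···(n+2(m-1)) / (2^{m-1}(m-1)!)) · r^{-(n+2(m-1))} · ∫_a^r g(τ) τ^{n-1}(r²−τ²)^{m-1} dτ for m ≥ 2, one has ((r/(n+2(m-1)))∂_r + 1) k(r) = (n(n+2)···(n+2(m-2)) / (2^{m-2}(m-2)!)) · r^{-(n+2(m-2))} · ∫_a^r g(τ) τ^{n-1}(r²−τ²)^{m-2} dτ. -/

import Mathlib

open intervalIntegral MeasureTheory Set Finset

section aux
variable {n a : ℝ} (ha : 0 < a) {g : ℝ → ℝ} (hg : ContinuousOn g (Set.Ici a))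
include ha hg

lemma aux_cont (j : ℕ) :
    ContinuousOn (fun τ : ℝ => g τ * τ ^ (n - 1) * τ ^ (2 * j)) (Set.Ici a) := by
  refine (hg.mul ?_).mul (continuous_pow _).continuousOn
  intro τ hτ
  exact (Real.continuousAt_rpow_const τ (n - 1)
    (Or.inl (ha.trans_le hτ).ne')).continuousWithinAt

lemma aux_intble (j : ℕ) {s : ℝ} (hs : a ≤ s) :
    IntervalIntegrable (fun τ : ℝ => g τ * τ ^ (n - 1) * τ ^ (2 * j)) volume a s := by
  refine ((aux_cont ha hg j).mono ?_).intervalIntegrable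
  rw [Set.uIcc_of_le hs]
  exact Set.Icc_subset_Ici_self

lemma aux_ftc (j : ℕ) {r : ℝ} (hr : a < r) :
    HasDerivAt (fun s => ∫ τ in a..s, g τ * τ ^ (n - 1) * τ ^ (2 * j))
      (g r * r ^ (n - 1) * r ^ (2 * j)) r := by
  refine intervalIntegral.integral_hasDerivAt_right (aux_intble ha hg j hr.le) ?_ ?_
  · exact ((aux_cont ha hg j).mono (Set.Ioi_subset_Ici le_rfl)).stronglyMeasurableAtFilter
      isOpen_Ioi r hr
  · exact ((aux_cont ha hg j) r (le_of_lt hr)).continuousAt (Ici_mem_nhds hr)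

lemma aux_point (l : ℕ) (s τ : ℝ) :
    g τ * τ ^ (n - 1) * (s ^ 2 - τ ^ 2) ^ l =
      ∑ k ∈ Finset.range (l + 1),
        ((l.choose k : ℝ) * (-1) ^ (l - k) * s ^ (2 * k)) *
          (g τ * τ ^ (n - 1) * τ ^ (2 * (l - k))) := by
  rw [show s ^ 2 - τ ^ 2 = s ^ 2 + -τ ^ 2 by ring, add_pow, Finset.mul_sum]
  refine Finset.sum_congr rfl fun k _ => ?_
  rw [neg_pow]
  ring

lemma aux_expand (l : ℕ) {s : ℝ} (hs : a ≤ s) :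
    (∫ τ in a..s, g τ * τ ^ (n - 1) * (s ^ 2 - τ ^ 2) ^ l) =
      ∑ k ∈ Finset.range (l + 1),
        ((l.choose k : ℝ) * (-1) ^ (l - k) * s ^ (2 * k)) *
          (∫ τ in a..s, g τ * τ ^ (n - 1) * τ ^ (2 * (l - k))) := by
  have : (∫ τ in a..s, g τ * τ ^ (n - 1) * (s ^ 2 - τ ^ 2) ^ l) =
      ∫ τ in a..s, ∑ k ∈ Finset.range (l + 1),
        ((l.choose k : ℝ) * (-1) ^ (l - k) * s ^ (2 * k)) *
          (g τ * τ ^ (n - 1) * τ ^ (2 * (l - k))) := by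
    refine intervalIntegral.integral_congr fun τ _ => ?_
    exact aux_point ha hg l s τ
  rw [this, intervalIntegral.integral_finset_sum]
  · exact Finset.sum_congr rfl fun k _ => intervalIntegral.integral_const_mul _ _
  · exact fun k _ => (aux_intble ha hg (l - k) hs).const_mul _

end aux

section aux2
variable {n a : ℝ} (ha : 0 < a) {g : ℝ → ℝ} (hg : ContinuousOn g (Set.Ici a))
include ha hg

set_option maxHeartbeats 1000000 in
lemma aux_F_deriv {m : ℕ} (hm : 2 ≤ m) {r : ℝ} (hr : a < r) :
    HasDerivAt (fun s => ∫ τ in a..s, g τ * τ ^ (n - 1) * (s ^ 2 - τ ^ 2) ^ (m - 1))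
      (2 * r * ((m : ℝ) - 1) * ∫ τ in a..r, g τ * τ ^ (n - 1) * (r ^ 2 - τ ^ 2) ^ (m - 2)) r := by
  obtain ⟨l, rfl⟩ : ∃ l, m = l + 1 := ⟨m - 1, by omega⟩
  have hl : 1 ≤ l := by omega
  simp only [Nat.add_sub_cancel, show l + 1 - 2 = l - 1 by omega]
  set G : ℕ → ℝ → ℝ := fun j s => ∫ τ in a..s, g τ * τ ^ (n - 1) * τ ^ (2 * j) with hG
  set c : ℕ → ℝ := fun k => ((l.choose k : ℝ) * (-1) ^ (l - k)) with hc
  -- derivative of the expanded sum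
  have hΦ : HasDerivAt (fun s => ∑ k ∈ Finset.range (l + 1), c k * (s ^ (2 * k) * G (l - k) s))
      (∑ k ∈ Finset.range (l + 1),
        c k * (((2 * k : ℕ) : ℝ) * r ^ (2 * k - 1) * G (l - k) r
          + r ^ (2 * k) * (g r * r ^ (n - 1) * r ^ (2 * (l - k))))) r := by
    refine HasDerivAt.fun_sum fun k _ => ?_
    exact ((hasDerivAt_pow (2 * k) r).mul (aux_ftc ha hg (l - k) hr)).const_mul (c k)
  have hF : HasDerivAt (fun s => ∫ τ in a..s, g τ * τ ^ (n - 1) * (s ^ 2 - τ ^ 2) ^ l)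
      (∑ k ∈ Finset.range (l + 1),
        c k * (((2 * k : ℕ) : ℝ) * r ^ (2 * k - 1) * G (l - k) r
          + r ^ (2 * k) * (g r * r ^ (n - 1) * r ^ (2 * (l - k))))) r := by
    refine hΦ.congr_of_eventuallyEq ?_
    filter_upwards [Ioi_mem_nhds hr] with s hs
    rw [aux_expand ha hg l (le_of_lt hs)]
    exact Finset.sum_congr rfl fun k _ => (mul_assoc _ _ _)
  convert hF using 1
  -- now identify the derivative value
  rw [aux_expand ha hg (l - 1) hr.le, Finset.mul_sum]
  have hsplit : ∑ k ∈ Finset.range (l + 1),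
      c k * (((2 * k : ℕ) : ℝ) * r ^ (2 * k - 1) * G (l - k) r
        + r ^ (2 * k) * (g r * r ^ (n - 1) * r ^ (2 * (l - k)))) =
      (∑ k ∈ Finset.range (l + 1), c k * (((2 * k : ℕ) : ℝ) * r ^ (2 * k - 1) * G (l - k) r))
      + ∑ k ∈ Finset.range (l + 1),
          (c k * r ^ (2 * k)) * (g r * r ^ (n - 1) * r ^ (2 * (l - k))) := by
    rw [← Finset.sum_add_distrib]
    exact Finset.sum_congr rfl fun k _ => by ring
  rw [hsplit]
  have hB : ∑ k ∈ Finset.range (l + 1),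
      (c k * r ^ (2 * k)) * (g r * r ^ (n - 1) * r ^ (2 * (l - k))) = 0 := by
    have := aux_point (n := n) (g := g) ha hg l r r
    rw [sub_self, zero_pow (by omega), mul_zero] at this
    rw [← this]
  rw [hB, add_zero, show l - 1 + 1 = l by omega, Finset.sum_range_succ']
  have h0 : c 0 * (((2 * 0 : ℕ) : ℝ) * r ^ (2 * 0 - 1) * G (l - 0) r) = 0 := by
    norm_num
  rw [h0, add_zero]
  refine Finset.sum_congr rfl fun k hk => ?_
  have hkl : k ≤ l - 1 := by
    have := Finset.mem_range.mp hk; omega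
  have hsub : l - (k + 1) = l - 1 - k := by omega
  have hchoose : (l : ℝ) * ((l - 1).choose k : ℝ) = (l.choose (k + 1) : ℝ) * ((k : ℝ) + 1) := by
    have := Nat.add_one_mul_choose_eq (l - 1) k
    rw [show l - 1 + 1 = l by omega] at this
    exact_mod_cast congrArg (Nat.cast : ℕ → ℝ) this
  have hpow : r ^ (2 * (k + 1) - 1) = r * r ^ (2 * k) := by
    rw [show 2 * (k + 1) - 1 = 2 * k + 1 by omega, pow_succ]
    ring
  simp only [hG, hc]
  rw [hsub, hpow]
  push_cast
  linear_combination (2 * r * r ^ (2 * k) * ((-1:ℝ)) ^ (l - 1 - k) *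
    (∫ τ in a..r, g τ * τ ^ (n - 1) * τ ^ (2 * (l - 1 - k)))) * hchoose

end aux2


set_option maxHeartbeats 1000000 in

/-- One-step recursion for the particular solution: applying `((r/(n+2(m-1)))∂_r + 1)` to
`k(r) = (n(n+2)⋯(n+2(m-1))/(2^{m-1}(m-1)!)) r^{-(n+2(m-1))} ∫_a^r g(τ)τ^{n-1}(r²-τ²)^{m-1} dτ`
yields the analogous expression with `m` replaced by `m-1`. -/
theorem k_recursion (n : ℝ) (hn : 0 < n) (m : ℕ) (hm : 2 ≤ m)
    (a : ℝ) (ha : 0 < a) (g : ℝ → ℝ) (hg : ContinuousOn g (Set.Ici a))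
    (k : ℝ → ℝ)
    (hk : ∀ r, k r =
      ((∏ i ∈ Finset.range m, (n + 2 * i)) / (2 ^ (m - 1) * (Nat.factorial (m - 1) : ℝ)))
        * r ^ (-(n + 2 * ((m : ℝ) - 1)))
        * ∫ τ in a..r, g τ * τ ^ (n - 1) * (r ^ 2 - τ ^ 2) ^ (m - 1)) :
    ∀ r, a < r →
      (r / (n + 2 * ((m : ℝ) - 1))) * deriv k r + k r =
        ((∏ i ∈ Finset.range (m - 1), (n + 2 * i)) / (2 ^ (m - 2) * (Nat.factorial (m - 2) : ℝ)))
          * r ^ (-(n + 2 * ((m : ℝ) - 2)))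
          * ∫ τ in a..r, g τ * τ ^ (n - 1) * (r ^ 2 - τ ^ 2) ^ (m - 2) := by
  intro r hr
  have hr0 : 0 < r := ha.trans hr
  obtain ⟨m', rfl⟩ : ∃ m', m = m' + 2 := ⟨m - 2, by omega⟩
  simp only [show m' + 2 - 1 = m' + 1 by omega, show m' + 2 - 2 = m' by omega] at hk ⊢
  set p : ℝ := n + 2 * (((m' + 2 : ℕ) : ℝ) - 1) with hp
  have hmc : ((m' + 2 : ℕ) : ℝ) = (m' : ℝ) + 2 := by push_cast; ring
  have hm'0 : (0:ℝ) ≤ (m' : ℝ) := Nat.cast_nonneg _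
  have hp0 : 0 < p := by rw [hp, hmc]; linarith
  set C : ℝ := (∏ i ∈ Finset.range (m' + 2), (n + 2 * i)) /
      (2 ^ (m' + 1) * (Nat.factorial (m' + 1) : ℝ)) with hC
  set C' : ℝ := (∏ i ∈ Finset.range (m' + 1), (n + 2 * i)) /
      (2 ^ m' * (Nat.factorial m' : ℝ)) with hC'
  set F : ℝ → ℝ := fun s => ∫ τ in a..s, g τ * τ ^ (n - 1) * (s ^ 2 - τ ^ 2) ^ (m' + 1)
    with hFdef
  set I2 : ℝ := ∫ τ in a..r, g τ * τ ^ (n - 1) * (r ^ 2 - τ ^ 2) ^ m' with hI2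
  have hkE : k = fun s => C * s ^ (-p) * F s := funext hk
  have hF : HasDerivAt F (2 * r * (((m' + 2 : ℕ) : ℝ) - 1) * I2) r := by
    have := aux_F_deriv (n := n) (m := m' + 2) ha hg (by omega) hr
    simpa [show m' + 2 - 1 = m' + 1 by omega, show m' + 2 - 2 = m' by omega] using this
  have hrpow : HasDerivAt (fun s : ℝ => s ^ (-p)) (-p * r ^ (-p - 1)) r :=
    Real.hasDerivAt_rpow_const (Or.inl hr0.ne')
  have hkd : HasDerivAt k
      (C * (-p * r ^ (-p - 1)) * F r + C * r ^ (-p) * (2 * r * (((m' + 2 : ℕ) : ℝ) - 1) * I2))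
      r := by
    rw [hkE]
    exact (hrpow.const_mul C).mul hF
  rw [hkd.deriv, hk r]
  -- rpow arithmetic
  have e2 : r * r ^ (-p - 1) = r ^ (-p) := by
    rw [show -p - 1 = -p + (-1) by ring, Real.rpow_add hr0, Real.rpow_neg_one]
    field_simp
  have e1 : r ^ (-(n + 2 * (((m' + 2 : ℕ) : ℝ) - 2))) = r ^ (-p) * r * r := by
    rw [show -(n + 2 * (((m' + 2 : ℕ) : ℝ) - 2)) = -p + 1 + 1 by rw [hp]; ring,
      Real.rpow_add hr0, Real.rpow_add hr0, Real.rpow_one]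
  -- constant arithmetic
  have hCC : C' = C * (2 * (((m' + 2 : ℕ) : ℝ) - 1)) / p := by
    rw [hC, hC', hp, Finset.prod_range_succ (fun i : ℕ => n + 2 * (i : ℝ)) (m' + 1),
      hmc, Nat.factorial_succ]
    have h2 : (2:ℝ) ^ m' ≠ 0 := by positivity
    have hfac : (Nat.factorial m' : ℝ) ≠ 0 := by positivity
    have hm1 : ((m' : ℝ) + 1) ≠ 0 := by positivity
    have hpne : n + 2 * (((m' : ℝ) + 2) - 1) ≠ 0 := by linarith
    push_cast
    field_simp
    ring
  rw [e1]
  have cancel : (r / p) * (C * (-p * r ^ (-p - 1)) * F r) + C * r ^ (-p) * F r = 0 := by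
    rw [← e2]
    field_simp
    ring
  have key : (r / p) * (C * r ^ (-p) * (2 * r * ((((m' + 2 : ℕ) : ℝ)) - 1) * I2)) =
      C' * (r ^ (-p) * r * r) * I2 := by
    rw [hCC]
    ring
  linear_combination cancel + key
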